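/- Let n ≥ 2 be an integer and let (t_k) be the real coefficients of the formal power series expansion (1+X)/(1 − (2n²−1)X + 2(n²−1)X² − 2X³) = ∑_{k≥0} t_k X^k. Then the polynomial r³ − (2n²−1)r² + 2(n²−1)r − 2 has a largest real root r_n, this root satisfies r_n > 1, and lim_{k→∞} t_k^{1/k} = r_n. -/

import Mathlib

open Filter PowerSeries

private lemma aux_stmt10 (a : ℝ) (ha : 7 ≤ a) (t : ℕ → ℝ)
    (h0 : t 0 = 1) (h1 : t 1 = a + 1) (h2 : t 2 = a^2 + 1)
    (hrec : ∀ k, t (k+3) = a * t (k+2) - (a-1) * t (k+1) + 2 * t k) :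
    ∃ rn : ℝ,
      (rn ^ 3 - a * rn ^ 2 + (a-1) * rn - 2 = 0) ∧
      (∀ x : ℝ, x ^ 3 - a * x ^ 2 + (a-1) * x - 2 = 0 → x ≤ rn) ∧
      1 < rn ∧
      Tendsto (fun k : ℕ => (t k) ^ (1 / (k : ℝ))) atTop (nhds rn) := by
  -- the root
  obtain ⟨r, hra, har, hp⟩ : ∃ r : ℝ, a - 1 ≤ r ∧ r ≤ a ∧ r^3 - a*r^2 + (a-1)*r - 2 = 0 := by
    have hcont : ContinuousOn (fun x : ℝ => x^3 - a*x^2 + (a-1)*x - 2) (Set.Icc (a-1) a) := by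
      fun_prop
    obtain ⟨r, hr, hr0⟩ := intermediate_value_Icc (by linarith : a - 1 ≤ a) hcont
      (by constructor <;> nlinarith :
        (0:ℝ) ∈ Set.Icc ((a-1)^3 - a*(a-1)^2 + (a-1)*(a-1) - 2) (a^3 - a*a^2 + (a-1)*a - 2))
    exact ⟨r, hr.1, hr.2, hr0⟩
  have hr6 : 6 ≤ r := by linarith
  have hrpos : 0 < r := by linarith
  set ε : ℝ := a - r with hε
  set c : ℝ := r^2 - a*r + a - 1 with hc
  have hε0 : 0 ≤ ε := by simp [hε]; linarith
  have hε1 : ε ≤ 1 := by simp [hε]; linarith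
  have hrc : r * c = 2 := by simp only [hc]; nlinarith [hp]
  have hc0 : 0 < c := by nlinarith
  have hc3 : c ≤ 1/3 := by nlinarith
  -- quadratic positive for x ≥ r
  have hquad : ∀ x : ℝ, r ≤ x → 0 < x^2 - ε*x + c := by
    intro x hx
    nlinarith
  -- maximality
  have hmax : ∀ x : ℝ, x ^ 3 - a * x ^ 2 + (a-1) * x - 2 = 0 → x ≤ r := by
    intro x hx
    by_contra hle
    push_neg at hle
    have hfact : x ^ 3 - a * x ^ 2 + (a-1) * x - 2 = (x - r) * (x^2 - ε*x + c) := by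
      simp only [hε, hc]; linear_combination hp
    rw [hfact] at hx
    have := hquad x (le_of_lt hle)
    nlinarith
  refine ⟨r, hp, hmax, by linarith, ?_⟩
  -- decomposition t k = A * r^k + u k
  have hq : 0 < r^2 - ε*r + c := hquad r le_rfl
  obtain ⟨A, hApos, hAq⟩ : ∃ A : ℝ, 0 < A ∧ A * (r^2 - ε*r + c) = t 2 - ε * t 1 + c := by
    refine ⟨(t 2 - ε * t 1 + c) / (r^2 - ε*r + c), ?_, div_mul_cancel₀ _ (ne_of_gt hq)⟩
    apply div_pos _ hq
    rw [h1, h2]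
    nlinarith
  set u : ℕ → ℝ := fun k => t k - A * r^k with hudef
  have hu : ∀ k, u (k+2) = ε * u (k+1) - c * u k := by
    intro k
    induction k with
    | zero =>
      show t 2 - A * r^2 = ε * (t 1 - A * r^1) - c * (t 0 - A * r^0)
      rw [h0]
      ring_nf
      linear_combination -hAq
    | succ k IH =>
      show t (k+3) - A * r^(k+3) = ε * (t (k+2) - A * r^(k+2)) - c * (t (k+1) - A * r^(k+1))
      have IH' : t (k+2) - A * r^(k+2) = ε * (t (k+1) - A * r^(k+1)) - c * (t k - A * r^k) := IH
      simp only [hε, hc] at IH' ⊢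
      linear_combination (hrec k) + r * IH' - (t k) * hp
  -- exponential bound on u
  obtain ⟨M, hM0, hMb⟩ : ∃ M : ℝ, 0 ≤ M ∧ ∀ k, |u k| ≤ M * 2^k := by
    refine ⟨max |u 0| |u 1|, le_trans (abs_nonneg _) (le_max_left _ _), ?_⟩
    set M := max |u 0| |u 1| with hMdef
    have hM0 : 0 ≤ M := le_trans (abs_nonneg _) (le_max_left _ _)
    have key : ∀ k, |u k| ≤ M * 2^k ∧ |u (k+1)| ≤ M * 2^(k+1) := by
      intro k
      induction k with
      | zero =>
        refine ⟨by rw [pow_zero, mul_one, hMdef]; exact le_max_left _ _, ?_⟩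
        calc |u 1| ≤ M := le_max_right _ _
          _ ≤ M * 2^1 := by nlinarith
      | succ k IH =>
        refine ⟨IH.2, ?_⟩
        rw [hu k]
        have hP : (0:ℝ) < 2^k := by positivity
        have e1 : (2:ℝ)^(k+1) = 2 * 2^k := by ring
        have e2 : (2:ℝ)^(k+1+1) = 4 * 2^k := by ring
        calc |ε * u (k+1) - c * u k| ≤ |ε * u (k+1)| + |c * u k| := abs_sub (ε * u (k+1)) (c * u k)
          _ = ε * |u (k+1)| + c * |u k| := by
              rw [abs_mul, abs_mul, abs_of_nonneg hε0, abs_of_nonneg (le_of_lt hc0)]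
          _ ≤ ε * (M * 2^(k+1)) + c * (M * 2^k) :=
              add_le_add (mul_le_mul_of_nonneg_left IH.2 hε0)
                (mul_le_mul_of_nonneg_left IH.1 hc0.le)
          _ ≤ M * 2^(k+1+1) := by
              have h4 : 0 ≤ (4 - 2*ε - c) * (M * 2^k) :=
                mul_nonneg (by linarith) (mul_nonneg hM0 hP.le)
              rw [e1, e2]; nlinarith [h4]
    exact fun k => (key k).1
  -- e k := u k / r^k tends to 0
  have he : Tendsto (fun k : ℕ => u k / r^k) atTop (nhds 0) := by
    apply squeeze_zero_norm (a := fun k : ℕ => M * (2/r)^k)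
    · intro k
      have hrk : (0:ℝ) < r^k := pow_pos hrpos k
      rw [Real.norm_eq_abs, abs_div, abs_of_pos hrk, div_pow, ← mul_div_assoc]
      exact (div_le_div_iff_of_pos_right hrk).mpr (hMb k)
    · have : Tendsto (fun k : ℕ => (2/r)^k) atTop (nhds 0) :=
        tendsto_pow_atTop_nhds_zero_of_lt_one (by positivity)
          ((div_lt_one hrpos).mpr (by linarith))
      simpa using this.const_mul M
  have htk : ∀ k, t k = r^k * (A + u k / r^k) := by
    intro k
    have hrk : (r:ℝ)^k ≠ 0 := ne_of_gt (pow_pos hrpos k)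
    show t k = r^k * (A + (t k - A * r^k) / r^k)
    field_simp
    ring
  have hf : Tendsto (fun k : ℕ => A + u k / r^k) atTop (nhds A) := by
    simpa using tendsto_const_nhds.add he
  have hfpos : ∀ᶠ k : ℕ in atTop, 0 < A + u k / r^k :=
    hf.eventually (eventually_gt_nhds hApos)
  have hlog : Tendsto (fun k : ℕ => Real.log (A + u k / r^k) * (1/(k:ℝ))) atTop (nhds 0) := by
    have hl : Tendsto (fun k : ℕ => Real.log (A + u k / r^k)) atTop (nhds (Real.log A)) :=
      ((Real.continuousAt_log (ne_of_gt hApos)).tendsto).comp hf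
    simpa using hl.mul tendsto_one_div_atTop_nhds_zero_nat
  have hexp : Tendsto (fun k : ℕ => r * Real.exp (Real.log (A + u k / r^k) * (1/(k:ℝ))))
      atTop (nhds r) := by
    have := (Real.continuous_exp.tendsto 0).comp hlog
    have h2 := this.const_mul r
    simpa using h2
  refine Filter.Tendsto.congr' ?_ hexp
  filter_upwards [hfpos, eventually_ge_atTop 1] with k hkpos hk1
  have hkne : (k:ℝ) ≠ 0 := Nat.cast_ne_zero.mpr (by omega)
  have hrk : (0:ℝ) < r^k := pow_pos hrpos k
  show r * Real.exp (Real.log (A + u k / r^k) * (1/(k:ℝ))) = t k ^ (1/(k:ℝ))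
  rw [htk k, Real.mul_rpow hrk.le hkpos.le]
  congr 1
  · rw [← Real.rpow_natCast r k, ← Real.rpow_mul hrpos.le,
      mul_one_div, div_self hkne, Real.rpow_one]
  · rw [Real.rpow_def_of_pos hkpos, mul_one_div, div_eq_mul_one_div]


/-- Exponential growth ratio of `A_u(n)`: if `∑ t_k X^k` is the power series expansion of
`(1+X)/(1-(2n²-1)X+2(n²-1)X²-2X³)`, then the cubic `r³-(2n²-1)r²+2(n²-1)r-2` has a
largest real root `r_n`, which satisfies `r_n > 1`, and `lim t_k^(1/k) = r_n`. -/
theorem stmt_10 (n : ℕ) (hn : 2 ≤ n) (t : ℕ → ℝ)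
    (ht : (1 - PowerSeries.C (R := ℝ) (2 * (n : ℝ) ^ 2 - 1) * PowerSeries.X
            + PowerSeries.C (R := ℝ) (2 * ((n : ℝ) ^ 2 - 1)) * PowerSeries.X ^ 2
            - PowerSeries.C (R := ℝ) 2 * PowerSeries.X ^ 3) * PowerSeries.mk t
          = 1 + PowerSeries.X) :
    ∃ rn : ℝ,
      (rn ^ 3 - (2 * (n : ℝ) ^ 2 - 1) * rn ^ 2 + 2 * ((n : ℝ) ^ 2 - 1) * rn - 2 = 0) ∧
      (∀ x : ℝ, x ^ 3 - (2 * (n : ℝ) ^ 2 - 1) * x ^ 2 + 2 * ((n : ℝ) ^ 2 - 1) * x - 2 = 0 →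
        x ≤ rn) ∧
      1 < rn ∧
      Tendsto (fun k : ℕ => (t k) ^ (1 / (k : ℝ))) atTop (nhds rn) := by
  set a : ℝ := 2 * (n : ℝ) ^ 2 - 1 with hadef
  have hn2 : (2:ℝ) ≤ (n:ℝ) := by exact_mod_cast hn
  have ha : 7 ≤ a := by rw [hadef]; nlinarith
  have e1 : (2 : ℝ) * ((n:ℝ)^2 - 1) = a - 1 := by rw [hadef]; ring
  rw [e1] at ht
  have hX1 : (PowerSeries.X : ℝ⟦X⟧) * PowerSeries.mk t
      = PowerSeries.X ^ 1 * PowerSeries.mk t := by rw [pow_one]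
  have g : ∀ k : ℕ, t k - (if 1 ≤ k then a * t (k-1) else 0)
      + (if 2 ≤ k then (a-1) * t (k-2) else 0) - (if 3 ≤ k then 2 * t (k-3) else 0)
      = (if k = 0 then 1 else 0) + (if k = 1 then 1 else 0) := by
    intro k
    have h := congrArg (PowerSeries.coeff (R := ℝ) k) ht
    simp only [sub_mul, add_mul, one_mul, mul_assoc, hX1, map_add, map_sub, coeff_C_mul,
      coeff_X_pow_mul', coeff_mk, coeff_one, coeff_X] at h
    split_ifs <;> simp_all <;> linarith
  have g0 := g 0
  have g1 := g 1
  have g2 := g 2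
  norm_num at g0 g1 g2
  have hrec : ∀ k, t (k+3) = a * t (k+2) - (a-1) * t (k+1) + 2 * t k := by
    intro k
    have gk := g (k+3)
    simp only [if_pos (by omega : 1 ≤ k+3), if_pos (by omega : 2 ≤ k+3),
      if_pos (by omega : 3 ≤ k+3), if_neg (by omega : ¬ k+3 = 0), if_neg (by omega : ¬ k+3 = 1),
      show k+3-1 = k+2 by omega, show k+3-2 = k+1 by omega, show k+3-3 = k by omega] at gk
    linarith
  obtain ⟨rn, hroot, hmx, h1rn, hten⟩ := aux_stmt10 a ha t g0
    (by linear_combination g1 + a*g0) (by linear_combination g2 + a*g1 + (a^2-a+1)*g0) hrec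
  exact ⟨rn, by rw [e1]; exact hroot, fun x hx => hmx x (by rw [e1] at hx; exact hx),
    h1rn, hten⟩
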